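/- Let q be an odd prime power and s ≥ 3 an odd integer with gcd(q,s)=1, and write q^{φ(s)} = m·2^A + 1 with m odd and A ≥ 1. Then for any n ≥ A − 1 and any irreducible factor f(x) of Φ_{s·2^A}(x) over F_q, the polynomial f(x^{2^{n−A+1}}) is irreducible over F_q. -/

import Mathlib

open Polynomial

private lemma zmod_pow_eq_one_iff {M q t : ℕ} (hq : 0 < q) :
    ((q : ZMod M)) ^ t = 1 ↔ M ∣ q ^ t - 1 := by
  rw [← Nat.cast_pow, show (1 : ZMod M) = ((1 : ℕ) : ZMod M) by norm_num,
    ZMod.natCast_eq_natCast_iff]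
  constructor
  · intro h
    exact (Nat.modEq_iff_dvd' (Nat.one_le_pow _ _ hq)).mp h.symm
  · intro h
    exact ((Nat.modEq_iff_dvd' (Nat.one_le_pow _ _ hq)).mpr h).symm

private lemma deg_irred_factor {F : Type} [Field F] [Fintype F] {M : ℕ} (hM : 0 < M)
    (hne : (M : F) ≠ 0) {h : F[X]} (hirr : Irreducible h) (hdvd : h ∣ cyclotomic M F) :
    h.natDegree = orderOf ((Fintype.card F : ZMod M)) := by
  classical
  set q := Fintype.card F with hq
  have hq2 : 2 ≤ q := Fintype.one_lt_card
  -- characteristic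
  set p := ringChar F with hpdef
  obtain ⟨r, hp, hqr⟩ := FiniteField.card F p
  haveI hpfact : Fact p.Prime := ⟨hp⟩
  have hpM : ¬ p ∣ M := by
    intro hdvd'
    exact hne ((CharP.cast_eq_zero_iff F p M).mpr hdvd')
  have hcop : Nat.Coprime q M := by
    rw [hq, hqr]
    exact ((Nat.Prime.coprime_iff_not_dvd hp).mpr hpM).pow_left _
  set D := orderOf ((q : ZMod M)) with hD
  have hMq : M ∣ q ^ M.totient - 1 :=
    (Nat.modEq_iff_dvd' (Nat.one_le_pow _ _ (by omega))).mp
      (Nat.ModEq.pow_totient hcop).symm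
  have hDpos : 0 < D := by
    rw [hD, orderOf_pos_iff, isOfFinOrder_iff_pow_eq_one]
    exact ⟨M.totient, Nat.totient_pos.mpr hM, (zmod_pow_eq_one_iff (by omega)).mpr hMq⟩
  have hMD : M ∣ q ^ D - 1 := (zmod_pow_eq_one_iff (by omega)).mp (pow_orderOf_eq_one _)
  -- the field K
  haveI : Fact (Irreducible h) := ⟨hirr⟩
  set K := AdjoinRoot h with hK
  let pb := AdjoinRoot.powerBasis (f := h) hirr.ne_zero
  haveI : Module.Finite F K := Module.Finite.of_basis pb.basis
  haveI : Finite K := Module.finite_of_finite F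
  letI : Fintype K := Fintype.ofFinite K
  have hcardK : Nat.card K = q ^ h.natDegree := by
    rw [Nat.card_eq_fintype_card, Module.card_fintype pb.basis, ← hq, Fintype.card_fin]
    rfl
  -- the root
  set z := AdjoinRoot.root h with hz
  have hzroot : (cyclotomic M K).IsRoot z := by
    have : (aeval z) (cyclotomic M F) = 0 := by
      rw [AdjoinRoot.aeval_eq, AdjoinRoot.mk_eq_zero]
      exact hdvd
    rwa [aeval_def, ← eval_map, map_cyclotomic] at this
  haveI : NeZero (M : K) :=
    ⟨fun hc => hne <| (algebraMap F K).injective <| by rw [map_natCast, map_zero]; exact hc⟩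
  have hprim : IsPrimitiveRoot z M := (Polynomial.isRoot_cyclotomic_iff).mp hzroot
  have hordz : orderOf z = M := hprim.eq_orderOf.symm
  have hz0 : z ≠ 0 := by
    intro h0
    have := hprim.pow_eq_one
    rw [h0, zero_pow hM.ne'] at this
    exact zero_ne_one this
  have hdegpos : 0 < h.natDegree := hirr.natDegree_pos
  -- M divides q^deg - 1
  have hMdeg : M ∣ q ^ h.natDegree - 1 := by
    have h1 : orderOf (Units.mk0 z hz0) ∣ Nat.card Kˣ := orderOf_dvd_natCard _
    rw [← orderOf_units, Units.val_mk0, hordz, Nat.card_units, hcardK] at h1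
    exact h1
  have hDdeg : D ∣ h.natDegree :=
    orderOf_dvd_iff_pow_eq_one.mpr ((zmod_pow_eq_one_iff (by omega)).mpr hMdeg)
  -- Frobenius power argument: deg ≤ D
  haveI : CharP K p := charP_of_injective_algebraMap (algebraMap F K).injective p
  have hfrob : ∀ a : F, a ^ p ^ ((r : ℕ) * D) = a := by
    intro a
    rw [pow_mul, ← hqr]
    exact FiniteField.pow_card_pow _ _
  let σ : K →ₐ[F] K :=
    { iterateFrobenius K p ((r : ℕ) * D) with
      commutes' := fun a => by
        simp only [RingHom.toMonoidHom_eq_coe, OneHom.toFun_eq_coe, MonoidHom.toOneHom_coe,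
          MonoidHom.coe_coe, iterateFrobenius_def]
        rw [← map_pow, hfrob] }
  have hσz : σ z = z := by
    show (iterateFrobenius K p ((r : ℕ) * D)) z = z
    rw [iterateFrobenius_def, pow_mul, ← hqr, ← hq]
    obtain ⟨t, ht⟩ := hMD
    have hqD1 : q ^ D = M * t + 1 := by
      have : 1 ≤ q ^ D := Nat.one_le_pow _ _ (by omega)
      omega
    rw [hqD1, pow_add, pow_mul, hprim.pow_eq_one, one_pow, pow_one, one_mul]
  have hσ : σ = AlgHom.id F K := AdjoinRoot.algHom_ext hσz
  have hall : ∀ x : K, x ^ q ^ D = x := by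
    intro x
    have h2 := AlgHom.congr_fun hσ x
    have h3 : (iterateFrobenius K p ((r : ℕ) * D)) x = x := h2
    rwa [iterateFrobenius_def, pow_mul, ← hqr, ← hq] at h3
  -- get deg ≤ D via cyclic generator
  obtain ⟨g, hg⟩ := IsCyclic.exists_generator (α := Kˣ)
  have hordg : orderOf g = q ^ h.natDegree - 1 := by
    rw [orderOf_eq_card_of_forall_mem_zpowers hg, Nat.card_units, hcardK]
  have hgpow : g ^ (q ^ D - 1) = 1 := by
    have h1 : 1 ≤ q ^ D := Nat.one_le_pow _ _ (by omega)
    have h4 : g ^ (q ^ D - 1) * g = 1 * g := by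
      rw [← pow_succ, Nat.sub_add_cancel h1, one_mul]
      ext
      push_cast [Units.val_pow_eq_pow_val]
      exact hall g
    exact mul_right_cancel h4
  have hdvd2 : q ^ h.natDegree - 1 ∣ q ^ D - 1 := hordg ▸ orderOf_dvd_of_pow_eq_one hgpow
  have hdegD : h.natDegree ≤ D := by
    have h1 : 2 ≤ q ^ D := by
      calc 2 = 2 ^ 1 := (pow_one 2).symm
      _ ≤ q ^ D := (Nat.pow_le_pow_left hq2 1).trans (Nat.pow_le_pow_right (by omega) hDpos)
    have h2 : 1 ≤ q ^ h.natDegree := Nat.one_le_pow _ _ (by omega)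
    have h3 : q ^ h.natDegree - 1 ≤ q ^ D - 1 := Nat.le_of_dvd (by omega) hdvd2
    have h4 : q ^ h.natDegree ≤ q ^ D := by omega
    exact (Nat.pow_le_pow_iff_right (by omega)).mp h4
  exact Nat.le_antisymm hdegD (Nat.le_of_dvd hdegpos hDdeg)

/-- If q is an odd prime power, s ≥ 3 odd with gcd(q,s)=1, q^{φ(s)} = m·2^A + 1 with m
odd and A ≥ 1, then for any n ≥ A − 1 and any irreducible factor f of Φ_{s·2^A} over
F_q, the polynomial f(x^{2^{n−A+1}}) is irreducible over F_q. -/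
theorem stmt3 (q : ℕ) (hq : IsPrimePow q) (hqodd : Odd q)
    (s : ℕ) (hs : 3 ≤ s) (hsodd : Odd s) (hgcd : Nat.Coprime q s)
    (m A : ℕ) (hA : 1 ≤ A) (hmodd : Odd m) (hqs : q ^ Nat.totient s = m * 2 ^ A + 1)
    (F : Type) [Field F] [Fintype F] (hcard : Fintype.card F = q)
    (n : ℕ) (hn : A - 1 ≤ n)
    (f : F[X]) (hf : Irreducible f) (hdvd : f ∣ cyclotomic (s * 2 ^ A) F) :
    Irreducible (f.comp (X ^ (2 ^ (n - A + 1)))) := by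
  classical
  have hq2 : 2 ≤ q := hq.two_le
  obtain ⟨qc, hqc⟩ := hqodd
  have hq3 : 3 ≤ q := by omega
  have hcq2 : Nat.Coprime q 2 := by
    rw [Nat.coprime_comm]
    exact (Nat.prime_two.coprime_iff_not_dvd).mpr (by omega)
  have hcop : ∀ e : ℕ, Nat.Coprime q (s * 2 ^ e) :=
    fun e => Nat.Coprime.mul_right hgcd (hcq2.pow_right e)
  have hspos : 0 < s := by omega
  obtain ⟨sc, hsc⟩ := hsodd
  have hcs2 : ∀ e : ℕ, Nat.Coprime s (2 ^ e) := fun e =>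
    (((Nat.prime_two.coprime_iff_not_dvd).mpr (by omega) : Nat.Coprime 2 s).symm).pow_right e
  -- A ≥ 3
  obtain ⟨r, hr⟩ := Nat.totient_even (show 2 < s by omega)
  obtain ⟨c, hc⟩ := (Odd.pow (⟨qc, hqc⟩ : Odd q) : Odd (q ^ r))
  have hsq : q ^ s.totient = 4 * (c * (c + 1)) + 1 := by
    rw [hr, pow_add, hc]; ring
  obtain ⟨d, hd⟩ := Nat.even_mul_succ_self c
  obtain ⟨mc, hmc⟩ := hmodd
  have h8 : m * 2 ^ A = 8 * d := by omega
  have hcm8 : Nat.Coprime 8 m :=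
    (((Nat.prime_two.coprime_iff_not_dvd).mpr (by omega) : Nat.Coprime 2 m)).pow_left 3
  have h8A : (8:ℕ) ∣ 2 ^ A := hcm8.dvd_of_dvd_mul_left ⟨d, h8⟩
  have hA3 : 3 ≤ A :=
    (Nat.pow_dvd_pow_iff_le_right (by norm_num : (1:ℕ) < 2)).mp (show 2^3 ∣ 2^A by simpa using h8A)
  -- base case facts
  set N := s * 2 ^ A with hN
  have hNpos : 0 < N := by positivity
  set d0 := orderOf ((q : ZMod N)) with hd0
  have heuler_s : s ∣ q ^ s.totient - 1 :=
    (Nat.modEq_iff_dvd' (Nat.one_le_pow _ _ (by omega))).mp (Nat.ModEq.pow_totient hgcd).symm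
  have hqs' : q ^ s.totient - 1 = m * 2 ^ A := by omega
  have hsm : s ∣ m := (hcs2 A).dvd_of_dvd_mul_right (hqs' ▸ heuler_s)
  have hNdvd : N ∣ q ^ s.totient - 1 := by
    rw [hqs', hN]
    exact Nat.mul_dvd_mul hsm dvd_rfl
  have hd0phi : d0 ∣ s.totient :=
    orderOf_dvd_iff_pow_eq_one.mpr ((zmod_pow_eq_one_iff (by omega)).mpr hNdvd)
  have hphipos : 0 < s.totient := Nat.totient_pos.mpr hspos
  have hd0pos : 0 < d0 := Nat.pos_of_ne_zero fun h0 => by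
    rw [h0] at hd0phi
    exact absurd (Nat.eq_zero_of_zero_dvd hd0phi) (by omega)
  have hbase1 : N ∣ q ^ d0 - 1 := (zmod_pow_eq_one_iff (by omega)).mp (pow_orderOf_eq_one _)
  have hbase2 : ¬ 2 ^ (A + 1) ∣ q ^ d0 - 1 := by
    intro hcon
    obtain ⟨t, ht⟩ := hd0phi
    have hdvd3 : q ^ d0 - 1 ∣ q ^ s.totient - 1 := by
      rw [ht, pow_mul]
      simpa using Nat.sub_dvd_pow_sub_pow (q ^ d0) 1 t
    obtain ⟨u, hu⟩ : 2 ^ (A+1) ∣ m * 2 ^ A := hqs' ▸ hcon.trans hdvd3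
    have h2A : 0 < 2 ^ A := by positivity
    have hm2u : m = 2 * u := by
      have : m * 2 ^ A = (2 * u) * 2 ^ A := by rw [hu, pow_succ]; ring
      exact Nat.eq_of_mul_eq_mul_right h2A this
    omega
  -- the key induction
  have key : ∀ j : ℕ, orderOf ((q : ZMod (s * 2 ^ (A + j)))) = 2 ^ j * d0 ∧
      (s * 2 ^ (A + j) ∣ q ^ (2 ^ j * d0) - 1) ∧ ¬ 2 ^ (A + j + 1) ∣ q ^ (2 ^ j * d0) - 1 := by
    intro j
    induction j with
    | zero =>
      refine ⟨?_, ?_, ?_⟩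
      · show orderOf ((q : ZMod (s * 2 ^ A))) = 2 ^ 0 * d0
        rw [pow_zero, one_mul]
      · show s * 2 ^ A ∣ q ^ (2 ^ 0 * d0) - 1
        rw [pow_zero, one_mul]
        exact hbase1
      · show ¬ 2 ^ (A + 1) ∣ q ^ (2 ^ 0 * d0) - 1
        rw [pow_zero, one_mul]
        exact hbase2
    | succ j ih =>
      show orderOf ((q : ZMod (s * 2 ^ (A + j + 1)))) = 2 ^ (j + 1) * d0 ∧
        (s * 2 ^ (A + j + 1) ∣ q ^ (2 ^ (j + 1) * d0) - 1) ∧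
        ¬ 2 ^ (A + j + 1 + 1) ∣ q ^ (2 ^ (j + 1) * d0) - 1
      obtain ⟨hord, hdv, hndv⟩ := ih
      obtain ⟨e, he⟩ : ∃ e, e = 2 ^ j * d0 := ⟨_, rfl⟩
      rw [← he] at hord hdv hndv
      have hepos : 0 < e := by rw [he]; positivity
      have hqe1 : 1 ≤ q ^ e := Nat.one_le_pow _ _ (by omega)
      have hfact : q ^ (2 * e) - 1 = (q ^ e + 1) * (q ^ e - 1) := by
        rw [mul_comm 2 e, pow_mul, ← Nat.sq_sub_sq]
        try norm_num
      obtain ⟨u, hu⟩ : 2 ^ (A + j) ∣ q ^ e - 1 := (dvd_mul_left _ _).trans hdv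
      have hAj2 : 2 ≤ A + j := by omega
      have huodd : ¬ 2 ∣ u := by
        rintro ⟨w, hw⟩
        refine hndv ⟨w, ?_⟩
        rw [hu, hw, pow_succ]
        try ring
      have h4 : (4:ℕ) ∣ q ^ e - 1 := by
        refine dvd_trans ?_ ⟨u, hu⟩
        calc (4:ℕ) = 2 ^ 2 := by norm_num
        _ ∣ 2 ^ (A + j) := pow_dvd_pow 2 hAj2
      obtain ⟨w, hw⟩ := h4
      have hplus : q ^ e + 1 = 2 * (2 * w + 1) := by omega
      have hval : q ^ (2*e) - 1 = 2 ^ (A+j+1) * ((2*w+1) * u) := by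
        rw [hfact, hplus, hu, pow_succ]
        ring
      have hdv' : 2 ^ (A + j + 1) ∣ q ^ (2*e) - 1 := ⟨_, hval⟩
      have hndv' : ¬ 2 ^ (A + j + 2) ∣ q ^ (2*e) - 1 := by
        intro hcon
        rw [hval] at hcon
        have h2 : (2:ℕ) ∣ (2*w+1) * u :=
          (Nat.mul_dvd_mul_iff_left (show 0 < 2^(A+j+1) by positivity)).mp
            (by rw [← pow_succ]; exact hcon)
        rcases Nat.prime_two.dvd_mul.mp h2 with h' | h'
        · omega
        · exact huodd h'
      have hs2e : s ∣ q ^ (2*e) - 1 := by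
        have h1 : s ∣ q ^ e - 1 := (dvd_mul_right s _).trans hdv
        have h2 : q ^ e - 1 ∣ q ^ (2*e) - 1 := by
          have h3 := Nat.sub_dvd_pow_sub_pow (q ^ e) 1 2
          rw [one_pow, ← pow_mul, mul_comm e 2] at h3
          exact h3
        exact h1.trans h2
      have hMdvd : s * 2 ^ (A + j + 1) ∣ q ^ (2*e) - 1 :=
        Nat.Coprime.mul_dvd_of_dvd_of_dvd (hcs2 _) hs2e hdv'
      obtain ⟨d', hd'⟩ : ∃ d', d' = orderOf ((q : ZMod (s * 2 ^ (A + j + 1)))) := ⟨_, rfl⟩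
      have hd'dvd : d' ∣ 2 * e := by
        rw [hd']
        exact orderOf_dvd_iff_pow_eq_one.mpr ((zmod_pow_eq_one_iff (by omega)).mpr hMdvd)
      have hlevel : s * 2 ^ (A + j + 1) ∣ q ^ d' - 1 := by
        rw [hd']
        exact (zmod_pow_eq_one_iff (by omega)).mp (pow_orderOf_eq_one _)
      have hedvd : e ∣ d' := by
        rw [← hord]
        apply orderOf_dvd_iff_pow_eq_one.mpr
        apply (zmod_pow_eq_one_iff (by omega)).mpr
        refine dvd_trans ?_ hlevel
        refine Nat.mul_dvd_mul_left s ?_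
        exact pow_dvd_pow 2 (by omega)
      obtain ⟨t, ht⟩ := hedvd
      have htdvd : t ∣ 2 := by
        have h5 : e * t ∣ e * 2 := by rw [← ht, mul_comm e 2]; exact hd'dvd
        exact (mul_dvd_mul_iff_left (by omega : (e:ℕ) ≠ 0)).mp h5
      have h2e : 2 * e = 2 ^ (j+1) * d0 := by rw [he, pow_succ]; ring
      rcases (Nat.dvd_prime Nat.prime_two).mp htdvd with rfl | rfl
      · exfalso
        rw [mul_one] at ht
        exact hndv ((dvd_mul_left _ _).trans (ht ▸ hlevel))
      · refine ⟨?_, by rw [← h2e]; exact hMdvd, by rw [← h2e]; exact hndv'⟩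
        rw [← hd', ht, he, pow_succ]
        ring
  -- nonvanishing of (s * 2^e : F)
  have hMne : ∀ e : ℕ, ((s * 2 ^ e : ℕ) : F) ≠ 0 := by
    intro e hzero
    set p := ringChar F with hp
    obtain ⟨r', hp', hqr⟩ := FiniteField.card F p
    have hpdvd : p ∣ s * 2 ^ e := (CharP.cast_eq_zero_iff F p _).mp hzero
    have hpq : p ∣ q := by
      have hq' : q = p ^ (r' : ℕ) := by rw [← hcard, hqr]
      rw [hq']
      exact dvd_pow_self p (by exact_mod_cast r'.ne_zero)
    have hcop' : Nat.Coprime p (s * 2 ^ e) := Nat.Coprime.coprime_dvd_left hpq (hcop e)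
    have : p ∣ 1 := hcop' ▸ Nat.dvd_gcd dvd_rfl hpdvd
    exact hp'.one_lt.ne' (Nat.dvd_one.mp this)
  -- degree of f
  have hdegf : f.natDegree = d0 := by
    have h1 := deg_irred_factor hNpos (hMne A) hf hdvd
    rw [hcard] at h1
    exact h1
  -- expanding cyclotomic polynomials
  have hexp : ∀ j : ℕ, (expand F (2 ^ j)) (cyclotomic N F) = cyclotomic (s * 2 ^ (A + j)) F := by
    intro j
    induction j with
    | zero => simp [hN]
    | succ j ih =>
      have h2dvd : 2 ∣ s * 2 ^ (A + j) :=
        Dvd.dvd.mul_left (dvd_pow_self 2 (by omega : A + j ≠ 0)) s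
      calc (expand F (2 ^ (j+1))) (cyclotomic N F)
          = (expand F 2) ((expand F (2 ^ j)) (cyclotomic N F)) := by
            rw [expand_expand, ← pow_succ']
      _ = (expand F 2) (cyclotomic (s * 2 ^ (A + j)) F) := by rw [ih]
      _ = cyclotomic ((s * 2 ^ (A + j)) * 2) F :=
            cyclotomic_expand_eq_cyclotomic Nat.prime_two h2dvd F
      _ = cyclotomic (s * 2 ^ (A + j + 1)) F := by rw [mul_assoc, ← pow_succ]
  -- the goal
  rw [← expand_eq_comp_X_pow]
  set k := n - A + 1 with hk
  set g := (expand F (2 ^ k)) f with hg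
  have hgdvd : g ∣ cyclotomic (s * 2 ^ (A + k)) F := by
    rw [← hexp k, hg]
    exact _root_.map_dvd (expand F (2 ^ k)) hdvd
  have hdegg : g.natDegree = 2 ^ k * d0 := by
    rw [hg, natDegree_expand, hdegf]
    ring
  have hposkd : 0 < 2 ^ k * d0 := by positivity
  have hgne : g ≠ 0 := by
    intro h0
    rw [h0, natDegree_zero] at hdegg
    omega
  have hgnu : ¬ IsUnit g := by
    intro hu
    have := natDegree_eq_zero_of_isUnit hu
    omega
  obtain ⟨h, hirr, hhdvd⟩ := WfDvdMonoid.exists_irreducible_factor hgnu hgne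
  have hdegh : h.natDegree = 2 ^ k * d0 := by
    have h1 := deg_irred_factor (M := s * 2 ^ (A + k)) (by positivity) (hMne _) hirr
      (hhdvd.trans hgdvd)
    rw [hcard] at h1
    rw [h1, (key k).1]
  obtain ⟨c', hc'⟩ := hhdvd
  have hhne : h ≠ 0 := hirr.ne_zero
  have hcne : c' ≠ 0 := by
    intro h0
    rw [h0, mul_zero] at hc'
    exact hgne hc'
  have hdegc : c'.natDegree = 0 := by
    have h2 := natDegree_mul hhne hcne
    rw [← hc', hdegg, hdegh] at h2
    omega
  have hcunit : IsUnit c' := by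
    rw [Polynomial.eq_C_of_natDegree_eq_zero hdegc]
    refine Polynomial.isUnit_C.mpr (IsUnit.mk0 _ ?_)
    intro h0
    apply hcne
    rw [Polynomial.eq_C_of_natDegree_eq_zero hdegc, h0, map_zero]
  have hassoc : Associated h g := ⟨hcunit.unit, by rw [hc']; rfl⟩
  rw [hg] at hassoc
  exact hassoc.irreducible hirr
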